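/- Let X be a set, b > 0, and let (φ_ℓ)_{ℓ≥1} be real-valued functions on X with |φ_ℓ(x)| ≤ b ℓ² for all x and ℓ. Let s > 0, let (c_ℓ)_{ℓ≥1} satisfy ‖f‖_s² := Σ_{ℓ=1}^∞ c_ℓ² ℓ^{2s} < ∞ and ‖f‖₂² := Σ_{ℓ=1}^∞ c_ℓ², and let p ≥ 1 be such that 2s/p − 4 > 1. Then for every x ∈ X, |Σ_{ℓ=1}^∞ c_ℓ φ_ℓ(x)| ≤ b · ζ(2s/p − 4)^{1/2} · ‖f‖_s^{1/p} · ‖f‖₂^{1−1/p}, where ζ is the Riemann zeta function. -/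

import Mathlib

set_option maxHeartbeats 1600000 in
/-- Parametrized interpolation inequality: if `|φ_ℓ(x)| ≤ b ℓ²`,
`‖f‖_s² = ∑_{ℓ≥1} c_ℓ² ℓ^{2s} < ∞`, and `p ≥ 1` with `2s/p − 4 > 1`, then
`|∑_{ℓ≥1} c_ℓ φ_ℓ(x)| ≤ b · ζ(2s/p − 4)^{1/2} · ‖f‖_s^{1/p} · ‖f‖₂^{1−1/p}`,
where `ζ(r) = ∑_{ℓ≥1} ℓ^{−r}`. -/
theorem interpolation_inequality_with_parameter
    {X : Type*} (b : ℝ) (hb : 0 < b)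
    (φ : ℕ → X → ℝ) (c : ℕ → ℝ) (s : ℝ) (hs : 0 < s)
    (hφ : ∀ ℓ : ℕ, 1 ≤ ℓ → ∀ x : X, |φ ℓ x| ≤ b * (ℓ : ℝ) ^ 2)
    (hsum : Summable (fun ℓ : ℕ => (c (ℓ + 1)) ^ 2 * ((ℓ + 1 : ℕ) : ℝ) ^ (2 * s)))
    (p : ℝ) (hp : 1 ≤ p) (hzeta : 1 < 2 * s / p - 4)
    (Ns N2 : ℝ)
    (hNs : Ns = Real.sqrt (∑' ℓ : ℕ, (c (ℓ + 1)) ^ 2 * ((ℓ + 1 : ℕ) : ℝ) ^ (2 * s)))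
    (hN2 : N2 = Real.sqrt (∑' ℓ : ℕ, (c (ℓ + 1)) ^ 2))
    (x : X) :
    |∑' ℓ : ℕ, c (ℓ + 1) * φ (ℓ + 1) x|
      ≤ b * Real.sqrt (∑' ℓ : ℕ, ((ℓ + 1 : ℕ) : ℝ) ^ (-(2 * s / p - 4)))
        * Ns ^ (1 / p) * N2 ^ (1 - 1 / p) := by
  have hp0 : (0:ℝ) < p := lt_of_lt_of_le one_pos hp
  have hn1 : ∀ ℓ : ℕ, (1:ℝ) ≤ ((ℓ + 1 : ℕ) : ℝ) := fun ℓ => by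
    exact_mod_cast Nat.succ_le_succ (Nat.zero_le ℓ)
  have hn0 : ∀ ℓ : ℕ, (0:ℝ) < ((ℓ + 1 : ℕ) : ℝ) := fun ℓ => lt_of_lt_of_le one_pos (hn1 ℓ)
  set u : ℕ → ℝ := fun ℓ => ((ℓ + 1 : ℕ) : ℝ) ^ (2 - s / p) with hu
  set v : ℕ → ℝ := fun ℓ => |c (ℓ + 1)| * ((ℓ + 1 : ℕ) : ℝ) ^ (s / p) with hv
  have hu_nonneg : ∀ ℓ, 0 ≤ u ℓ := fun ℓ => Real.rpow_nonneg (hn0 ℓ).le _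
  have hv_nonneg : ∀ ℓ, 0 ≤ v ℓ := fun ℓ =>
    mul_nonneg (abs_nonneg _) (Real.rpow_nonneg (hn0 ℓ).le _)
  have hu2 : ∀ ℓ, u ℓ ^ (2:ℝ) = ((ℓ + 1 : ℕ) : ℝ) ^ (-(2 * s / p - 4)) := by
    intro ℓ
    rw [hu, ← Real.rpow_mul (hn0 ℓ).le]
    norm_num
    ring_nf
  have hv2 : ∀ ℓ, v ℓ ^ (2:ℝ) = (c (ℓ + 1)) ^ 2 * ((ℓ + 1 : ℕ) : ℝ) ^ (2 * s / p) := by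
    intro ℓ
    rw [hv, Real.mul_rpow (abs_nonneg _) (Real.rpow_nonneg (hn0 ℓ).le _),
      ← Real.rpow_mul (hn0 ℓ).le]
    rw [show |c (ℓ+1)| ^ (2:ℝ) = |c (ℓ+1)| ^ (2:ℕ) from Real.rpow_natCast _ 2]
    rw [sq_abs]
    ring_nf
  have huv : ∀ ℓ, u ℓ * v ℓ = |c (ℓ + 1)| * ((ℓ + 1 : ℕ) : ℝ) ^ (2:ℕ) := by
    intro ℓ
    have h1 : u ℓ * v ℓ
        = |c (ℓ + 1)| * (((ℓ + 1 : ℕ) : ℝ) ^ (2 - s / p) * ((ℓ + 1 : ℕ) : ℝ) ^ (s / p)) := by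
      simp only [hu, hv]; ring
    rw [h1, ← Real.rpow_add (hn0 ℓ), show (2 - s / p) + s / p = ((2:ℕ):ℝ) by push_cast; ring,
      Real.rpow_natCast]
  -- summability facts
  have hz : Summable (fun ℓ : ℕ => ((ℓ + 1 : ℕ) : ℝ) ^ (-(2 * s / p - 4))) := by
    have h := Real.summable_nat_rpow.mpr (by linarith : -(2 * s / p - 4) < -1)
    exact (summable_nat_add_iff 1).mpr h
  have hm : Summable (fun ℓ : ℕ => (c (ℓ + 1)) ^ 2 * ((ℓ + 1 : ℕ) : ℝ) ^ (2 * s / p)) := by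
    refine Summable.of_nonneg_of_le (fun ℓ => by positivity) (fun ℓ => ?_) hsum
    have h2 : 2 * s / p ≤ 2 * s := by
      rw [div_le_iff₀ hp0]; nlinarith
    exact mul_le_mul_of_nonneg_left
      (Real.rpow_le_rpow_of_exponent_le (hn1 ℓ) h2) (by positivity)
  -- Cauchy-Schwarz
  have h22 : (2:ℝ).HolderConjugate 2 := Real.HolderConjugate.two_two
  have hCS := Real.summable_and_inner_le_Lp_mul_Lq_tsum_of_nonneg h22 hu_nonneg hv_nonneg
    (by simpa only [hu2] using hz) (by simpa only [hv2] using hm)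
  set Z : ℝ := ∑' ℓ : ℕ, ((ℓ + 1 : ℕ) : ℝ) ^ (-(2 * s / p - 4)) with hZ
  set M : ℝ := ∑' ℓ : ℕ, (c (ℓ + 1)) ^ 2 * ((ℓ + 1 : ℕ) : ℝ) ^ (2 * s / p) with hM
  set A : ℝ := ∑' ℓ : ℕ, (c (ℓ + 1)) ^ 2 * ((ℓ + 1 : ℕ) : ℝ) ^ (2 * s) with hA
  set B : ℝ := ∑' ℓ : ℕ, (c (ℓ + 1)) ^ 2 with hB
  have hZ0 : 0 ≤ Z := tsum_nonneg fun ℓ => Real.rpow_nonneg (hn0 ℓ).le _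
  have hA0 : 0 ≤ A := tsum_nonneg fun ℓ => by positivity
  have hB0 : 0 ≤ B := tsum_nonneg fun ℓ => by positivity
  have hCS2 : ∑' ℓ, u ℓ * v ℓ ≤ Real.sqrt Z * Real.sqrt M := by
    have h := hCS.2
    rwa [tsum_congr hu2, tsum_congr hv2, ← hZ, ← hM,
      ← Real.sqrt_eq_rpow, ← Real.sqrt_eq_rpow] at h
  -- Hölder interpolation: M ≤ A^(1/p) * B^(1-1/p)
  have hHolder : M ≤ A ^ ((1:ℝ)/p) * B ^ (1 - 1/p) := by
    rcases eq_or_lt_of_le hp with hp1 | hp1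
    · have hpe : p = 1 := hp1.symm
      subst hpe
      rw [hM, hA]
      norm_num
    · set q : ℝ := p / (p - 1) with hq
      have hpq : p.HolderConjugate q := Real.HolderConjugate.conjExponent hp1
      have hq0 : (0:ℝ) < q := hpq.symm.pos
      have h1q : (1:ℝ)/q = 1 - 1/p := by
        have := hpq.inv_add_inv_eq_one
        rw [one_div, one_div]; linarith
      have hfp : ∀ ℓ, (((c (ℓ+1))^2 * ((ℓ + 1 : ℕ) : ℝ) ^ (2 * s)) ^ ((1:ℝ)/p)) ^ p
          = (c (ℓ+1))^2 * ((ℓ + 1 : ℕ) : ℝ) ^ (2 * s) := by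
        intro ℓ
        rw [← Real.rpow_mul (by positivity), one_div,
          inv_mul_cancel₀ (ne_of_gt hp0), Real.rpow_one]
      have hgq : ∀ ℓ, (((c (ℓ+1))^2) ^ ((1:ℝ)/q)) ^ q = (c (ℓ+1))^2 := by
        intro ℓ
        rw [← Real.rpow_mul (by positivity), one_div,
          inv_mul_cancel₀ (ne_of_gt hq0), Real.rpow_one]
      have hterm : ∀ ℓ, ((c (ℓ+1))^2 * ((ℓ + 1 : ℕ) : ℝ) ^ (2 * s)) ^ ((1:ℝ)/p)
          * ((c (ℓ+1))^2) ^ ((1:ℝ)/q)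
          = (c (ℓ + 1)) ^ 2 * ((ℓ + 1 : ℕ) : ℝ) ^ (2 * s / p) := by
        intro ℓ
        rcases eq_or_ne (c (ℓ+1)) 0 with h0 | h0
        · rw [h0]
          rw [show ((0:ℝ)^2 : ℝ) = 0 by ring]
          rw [zero_mul, Real.zero_rpow (by positivity : (1:ℝ)/p ≠ 0), zero_mul, zero_mul]
        · have hc2 : (0:ℝ) < (c (ℓ+1))^2 := by positivity
          rw [Real.mul_rpow hc2.le (Real.rpow_nonneg (hn0 ℓ).le _),
            ← Real.rpow_mul (hn0 ℓ).le, mul_assoc,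
            mul_comm (((ℓ + 1 : ℕ) : ℝ) ^ (2 * s * (1/p))), ← mul_assoc,
            ← Real.rpow_add hc2,
            show (1:ℝ)/p + 1/q = 1 by rw [one_div, one_div]; exact hpq.inv_add_inv_eq_one,
            Real.rpow_one, show 2 * s * (1/p) = 2 * s / p by ring]
      have hHo := Real.summable_and_inner_le_Lp_mul_Lq_tsum_of_nonneg hpq
        (f := fun ℓ => ((c (ℓ+1))^2 * ((ℓ + 1 : ℕ) : ℝ) ^ (2 * s)) ^ ((1:ℝ)/p))
        (g := fun ℓ => ((c (ℓ+1))^2) ^ ((1:ℝ)/q))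
        (fun ℓ => Real.rpow_nonneg (by positivity) _)
        (fun ℓ => Real.rpow_nonneg (by positivity) _)
        (by simpa only [hfp] using hsum)
        (by
          simp only [hgq]
          refine Summable.of_nonneg_of_le (fun ℓ => by positivity) (fun ℓ => ?_) hsum
          nth_rewrite 1 [show (c (ℓ+1))^2 = (c (ℓ+1))^2 * 1 by ring]
          refine mul_le_mul_of_nonneg_left ?_ (by positivity)
          rw [← Real.rpow_zero (((ℓ + 1 : ℕ) : ℝ))]
          exact Real.rpow_le_rpow_of_exponent_le (hn1 ℓ) (by positivity))
      have h2 := hHo.2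
      rwa [tsum_congr hterm, tsum_congr hfp, tsum_congr hgq, ← hM, ← hA, ← hB, h1q] at h2
  -- assemble
  have hcφ_bound : ∀ ℓ, |c (ℓ+1) * φ (ℓ+1) x| ≤ b * (u ℓ * v ℓ) := by
    intro ℓ
    rw [abs_mul, huv ℓ]
    calc |c (ℓ+1)| * |φ (ℓ+1) x|
        ≤ |c (ℓ+1)| * (b * ((ℓ + 1 : ℕ) : ℝ) ^ 2) :=
          mul_le_mul_of_nonneg_left (hφ (ℓ+1) (by omega) x) (abs_nonneg _)
      _ = b * (|c (ℓ+1)| * ((ℓ + 1 : ℕ) : ℝ) ^ (2:ℕ)) := by ring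
  have hsummul : Summable (fun ℓ => b * (u ℓ * v ℓ)) := hCS.1.mul_left b
  have habs : Summable (fun ℓ => |c (ℓ+1) * φ (ℓ+1) x|) :=
    Summable.of_nonneg_of_le (fun _ => abs_nonneg _) hcφ_bound hsummul
  have e1 : Real.sqrt (A ^ ((1:ℝ)/p)) = (Real.sqrt A) ^ ((1:ℝ)/p) := by
    rw [Real.sqrt_eq_rpow, Real.sqrt_eq_rpow, ← Real.rpow_mul hA0, ← Real.rpow_mul hA0,
      mul_comm]
  have e2 : Real.sqrt (B ^ (1 - 1/p)) = (Real.sqrt B) ^ (1 - 1/p) := by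
    rw [Real.sqrt_eq_rpow, Real.sqrt_eq_rpow, ← Real.rpow_mul hB0, ← Real.rpow_mul hB0,
      mul_comm]
  calc |∑' ℓ : ℕ, c (ℓ + 1) * φ (ℓ + 1) x|
      ≤ ∑' ℓ : ℕ, |c (ℓ + 1) * φ (ℓ + 1) x| := by
        simpa only [Real.norm_eq_abs] using
          norm_tsum_le_tsum_norm (f := fun ℓ : ℕ => c (ℓ + 1) * φ (ℓ + 1) x)
            (by simpa only [Real.norm_eq_abs] using habs)
    _ ≤ ∑' ℓ : ℕ, b * (u ℓ * v ℓ) := Summable.tsum_le_tsum hcφ_bound habs hsummul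
    _ = b * ∑' ℓ : ℕ, u ℓ * v ℓ := tsum_mul_left
    _ ≤ b * (Real.sqrt Z * Real.sqrt M) := mul_le_mul_of_nonneg_left hCS2 hb.le
    _ ≤ b * (Real.sqrt Z * Real.sqrt (A ^ ((1:ℝ)/p) * B ^ (1 - 1/p))) := by
        refine mul_le_mul_of_nonneg_left (mul_le_mul_of_nonneg_left ?_ (Real.sqrt_nonneg _)) hb.le
        exact Real.sqrt_le_sqrt hHolder
    _ = b * Real.sqrt Z * Ns ^ (1 / p) * N2 ^ (1 - 1 / p) := by
        rw [hNs, hN2, Real.sqrt_mul (Real.rpow_nonneg hA0 _), e1, e2]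
        ring
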